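/- Define V₁(r,s,t) = (s, t, r, 0, 0, r) and V₂(u,v,w) = (1 − 2uw + vw², w(1 − uw + vw²), u − vw, −vw², v, u + vw), maps into ℝ⁶. Then { V₁(r,s,t) : r ≠ 0, s,t ∈ ℝ } ∩ { V₂(u,v,w) : u ≠ 0, v,w ∈ ℝ } = { (1 − 2uw, w(1 − uw), u, 0, 0, u) : u ≠ 0, w ∈ ℝ } = { V₂(u,0,w) : u ≠ 0, w ∈ ℝ }; in particular the two 3-parameter families intersect along a 2-parameter family. -/
import Mathlib


/-- The space of Type B models: `(a,b,c,d,e,f)` records the Christoffel symbols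
`Γᵢⱼᵏ = Aᵢⱼᵏ / x¹`. -/
abbrev R6 : Type := ℝ × ℝ × ℝ × ℝ × ℝ × ℝ

def V1 : ℝ → ℝ → ℝ → R6 := fun r s t => (s, t, r, 0, 0, r)

def V2 : ℝ → ℝ → ℝ → R6 := fun u v w =>
  (1 - 2*u*w + v*w^2, w*(1 - u*w + v*w^2), u - v*w, -v*w^2, v, u + v*w)

theorem stmt_19 :
    {x : R6 | ∃ r s t : ℝ, r ≠ 0 ∧ x = V1 r s t} ∩
        {x : R6 | ∃ u v w : ℝ, u ≠ 0 ∧ x = V2 u v w} =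
      {x : R6 | ∃ u w : ℝ, u ≠ 0 ∧ x = (1 - 2*u*w, w*(1 - u*w), u, 0, 0, u)} ∧
    {x : R6 | ∃ u w : ℝ, u ≠ 0 ∧ x = (1 - 2*u*w, w*(1 - u*w), u, 0, 0, u)} =
      {x : R6 | ∃ u w : ℝ, u ≠ 0 ∧ x = V2 u 0 w} := by
  constructor
  · ext x
    simp only [Set.mem_inter_iff, Set.mem_setOf_eq, V1, V2]
    constructor
    · rintro ⟨⟨r, s, t, hr, rfl⟩, u, v, w, hu, h⟩
      rw [Prod.ext_iff, Prod.ext_iff, Prod.ext_iff, Prod.ext_iff, Prod.ext_iff] at h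
      obtain ⟨h1, h2, h3, h4, h5, h6⟩ := h
      dsimp at h1 h2 h3 h4 h5 h6
      have hv : v = 0 := h5.symm
      subst hv
      refine ⟨u, w, hu, ?_⟩
      rw [Prod.ext_iff, Prod.ext_iff, Prod.ext_iff, Prod.ext_iff, Prod.ext_iff]
      refine ⟨by rw [h1]; ring, by rw [h2]; ring, by rw [h3]; ring, rfl, rfl,
        by rw [h6]; ring⟩
    · rintro ⟨u, w, hu, rfl⟩
      exact ⟨⟨u, 1 - 2*u*w, w*(1 - u*w), hu, by simp⟩,
        u, 0, w, hu, by norm_num⟩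
  · ext x
    simp only [Set.mem_setOf_eq, V2]
    constructor
    · rintro ⟨u, w, hu, rfl⟩
      exact ⟨u, w, hu, by norm_num⟩
    · rintro ⟨u, w, hu, rfl⟩
      exact ⟨u, w, hu, by norm_num⟩
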